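/- In the Pinkall–Thorbergsson construction, for z ∈ M_+^t and 1 ≤ α ≤ m, the shape operator A_α of M_+^t ⊂ S^{2l-1}(1) with respect to the unit normal Q_α z, given by A_α X = -(Q_α X)^T for tangent vectors X, has eigenvalues 1, 0, -1 with multiplicities l-m-1, m, l-m-1, respectively. -/

import Mathlib

open Matrix Real

noncomputable section

/-- The matrix `Q₀ = diag(tan t · Id, -cot t · Id)` on `ℝ^l ⊕ ℝ^l`. -/
def ptQzero (l : ℕ) (t : ℝ) : Matrix (Fin l ⊕ Fin l) (Fin l ⊕ Fin l) ℝ :=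
  Matrix.fromBlocks (Real.tan t • 1) 0 0 (-(Real.cot t • 1))

/-- A matrix on `ℝ^l ⊕ ℝ^l` acting on the corresponding Euclidean space. -/
def matLin {l : ℕ} (A : Matrix (Fin l ⊕ Fin l) (Fin l ⊕ Fin l) ℝ) :
    EuclideanSpace ℝ (Fin l ⊕ Fin l) →ₗ[ℝ] EuclideanSpace ℝ (Fin l ⊕ Fin l) :=
  Matrix.toEuclideanLin A

/-- The tangent space `T_z M₊ᵗ`, i.e. the orthogonal complement of
`span{z, Q₀z, ..., Q_m z}` in `ℝ^{2l}`. -/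
def ptTangent {l m : ℕ} (Q : Fin (m + 1) → Matrix (Fin l ⊕ Fin l) (Fin l ⊕ Fin l) ℝ)
    (z : EuclideanSpace ℝ (Fin l ⊕ Fin l)) : Submodule ℝ (EuclideanSpace ℝ (Fin l ⊕ Fin l)) :=
  (Submodule.span ℝ (insert z (Set.range fun α => matLin (Q α) z)))ᗮ

/-- The shape operator `A X = -(Q X)ᵀ` (tangential projection) on the tangent space `T`. -/
def shapeOp {l : ℕ} (T : Submodule ℝ (EuclideanSpace ℝ (Fin l ⊕ Fin l)))
    (A : Matrix (Fin l ⊕ Fin l) (Fin l ⊕ Fin l) ℝ) : T →ₗ[ℝ] T :=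
  -(((T.orthogonalProjectionOnto).toLinearMap).comp ((matLin A).comp T.subtype))


abbrev EPT (l : ℕ) := EuclideanSpace ℝ (Fin l ⊕ Fin l)
abbrev MPT (l : ℕ) := Matrix (Fin l ⊕ Fin l) (Fin l ⊕ Fin l) ℝ


variable {l : ℕ}

lemma matLin_mul (A B : MPT l) (x : EPT l) : matLin (A * B) x = matLin A (matLin B x) := by
  simp [matLin, Matrix.toEuclideanLin_apply, Matrix.mulVec_mulVec]

lemma matLin_one (x : EPT l) : matLin (1 : MPT l) x = x := by
  simp [matLin, Matrix.toEuclideanLin_apply]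

lemma matLin_smul (r : ℝ) (A : MPT l) (x : EPT l) : matLin (r • A) x = r • matLin A x := by
  simp [matLin]

lemma matLin_add (A B : MPT l) (x : EPT l) : matLin (A + B) x = matLin A x + matLin B x := by
  simp [matLin]

lemma matLin_neg (A : MPT l) (x : EPT l) : matLin (-A) x = -(matLin A x) := by
  simp [matLin]

lemma inner_matLin (A : MPT l) (x y : EPT l) :
    (inner ℝ (matLin A x) y : ℝ) = inner ℝ x (matLin Aᵀ y) := by
  have h : (matLin Aᵀ : EPT l →ₗ[ℝ] EPT l) = LinearMap.adjoint (matLin A) := by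
    have := Matrix.toEuclideanLin_conjTranspose_eq_adjoint A
    rw [Matrix.conjTranspose_eq_transpose_of_trivial] at this
    simpa only [matLin] using this
  rw [h, LinearMap.adjoint_inner_right]

lemma phi_transpose (A : MPT l) (z : EPT l) :
    (inner ℝ z (matLin Aᵀ z) : ℝ) = inner ℝ z (matLin A z) := by
  rw [← inner_matLin, real_inner_comm]

lemma phi_skew {A : MPT l} (h : Aᵀ = -A) (z : EPT l) : (inner ℝ z (matLin A z) : ℝ) = 0 := by
  have := phi_transpose A z
  rw [h, matLin_neg, inner_neg_right] at this
  linarith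

lemma matLin_diag_inl (a b : ℝ) (v : EPT l) (i : Fin l) :
    matLin (Matrix.fromBlocks (a • (1 : Matrix (Fin l) (Fin l) ℝ)) 0 0
      (b • (1 : Matrix (Fin l) (Fin l) ℝ))) v (Sum.inl i) = a * v (Sum.inl i) := by
  simp [matLin, Matrix.toEuclideanLin_apply, Matrix.mulVec, dotProduct,
    Fintype.sum_sum_type, Matrix.one_apply, mul_ite, Finset.sum_ite_eq]

lemma matLin_diag_inr (a b : ℝ) (v : EPT l) (i : Fin l) :
    matLin (Matrix.fromBlocks (a • (1 : Matrix (Fin l) (Fin l) ℝ)) 0 0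
      (b • (1 : Matrix (Fin l) (Fin l) ℝ))) v (Sum.inr i) = b * v (Sum.inr i) := by
  simp [matLin, Matrix.toEuclideanLin_apply, Matrix.mulVec, dotProduct,
    Fintype.sum_sum_type, Matrix.one_apply, mul_ite, Finset.sum_ite_eq]


lemma mem_orth_span {s : Set (EPT l)} {k : EPT l} (h : ∀ v ∈ s, (inner ℝ v k : ℝ) = 0) :
    k ∈ (Submodule.span ℝ s)ᗮ := by
  rw [Submodule.mem_orthogonal]
  intro u hu
  induction hu using Submodule.span_induction with
  | mem x hx => exact h x hx
  | zero => simp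
  | add x y _ _ hx hy => rw [inner_add_left, hx, hy, add_zero]
  | smul r x _ hx => rw [inner_smul_left, hx, mul_zero]


set_option maxHeartbeats 1000000 in
lemma key (l m : ℕ) (hl : m + 2 ≤ l)
    (S J : EPT l →ₗ[ℝ] EPT l) (z : EPT l) (n : Fin (m + 1) → EPT l) (α : Fin (m + 1))
    (hadj : ∀ x y : EPT l, (inner ℝ (S x) y : ℝ) = inner ℝ x (S y))
    (hSS : ∀ x, S (S x) = x)
    (hJJ : ∀ x, J (J x) = x)
    (hJS : ∀ x, J (S x) = -S (J x))
    (hnα : n α = S z)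
    (hzz : (inner ℝ z z : ℝ) = 1)
    (hzn : ∀ β, (inner ℝ z (n β) : ℝ) = 0)
    (hnn : ∀ β γ, (inner ℝ (n β) (n γ) : ℝ) = if β = γ then 1 else 0)
    (hSn : ∀ β γ, (inner ℝ (n β) (S (n γ)) : ℝ) = 0)
    (T : Submodule ℝ (EPT l)) (hT : T = (Submodule.span ℝ (insert z (Set.range n)))ᗮ)
    (A : T →ₗ[ℝ] T)
    (hA : A = -(((T.orthogonalProjectionOnto).toLinearMap).comp (S.comp T.subtype))) :
    Module.finrank ℝ (Module.End.eigenspace A 1) = l - m - 1 ∧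
    Module.finrank ℝ (Module.End.eigenspace A 0) = m ∧
    Module.finrank ℝ (Module.End.eigenspace A (-1)) = l - m - 1 := by
  classical
  have hdimE : Module.finrank ℝ (EPT l) = 2 * l := by
    simp [finrank_euclideanSpace]; ring
  set N : Submodule ℝ (EPT l) := Submodule.span ℝ (insert z (Set.range n)) with hN
  -- orthonormal basis of N
  have hrange : insert z (Set.range n) = Set.range (fun o : Option (Fin (m+1)) => o.elim z n) := by
    ext x
    constructor
    · rintro (rfl | ⟨β, rfl⟩)
      · exact ⟨none, rfl⟩
      · exact ⟨some ‹_›, by simp⟩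
    · rintro ⟨o, rfl⟩
      cases o with
      | none => exact Set.mem_insert _ _
      | some β => exact Set.mem_insert_of_mem _ ⟨β, rfl⟩
  have hbON : Orthonormal ℝ (fun o : Option (Fin (m+1)) => o.elim z n) := by
    rw [orthonormal_iff_ite]
    rintro (_ | β) (_ | γ)
    · simpa using hzz
    · simpa using hzn _
    · rw [real_inner_comm]
      simpa using hzn _
    · simpa [Option.some_inj] using hnn β γ
  have hNrank : Module.finrank ℝ N = m + 2 := by
    rw [hN, hrange, finrank_span_eq_card hbON.linearIndependent]
    simp
  have hdimT : Module.finrank ℝ T + (m + 2) = 2 * l := by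
    rw [hT, ← hNrank, ← hdimE, add_comm]
    exact N.finrank_add_finrank_orthogonal
  -- eigenspaces of S both have dimension l
  set U : ℝ → Submodule ℝ (EPT l) := fun ε => Module.End.eigenspace S ε with hU
  have hUmem : ∀ ε (v : EPT l), v ∈ U ε ↔ S v = ε • v := fun ε v => Module.End.mem_eigenspace_iff
  have hUdim : ∀ ε : ℝ, ε = 1 ∨ ε = -1 → Module.finrank ℝ (U ε) = l := by
    have hmapJ : ∀ ε : ℝ, ε = 1 ∨ ε = -1 → ∀ v ∈ U ε, J v ∈ U (-ε) := by
      intro ε hε v hv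
      rw [hUmem] at hv ⊢
      have h := hJS v
      rw [hv, _root_.map_smul] at h
      rw [neg_smul, h, neg_neg]
    have hle : ∀ ε : ℝ, ε = 1 ∨ ε = -1 →
        Module.finrank ℝ (U ε) ≤ Module.finrank ℝ (U (-ε)) := by
      intro ε hε
      have h1 : U ε ≤ Submodule.map J (U (-ε)) := by
        intro v hv
        have : J v ∈ U (-ε) := by
          have := hmapJ ε hε v hv
          exact this
        exact ⟨J v, this, hJJ v⟩
      calc Module.finrank ℝ (U ε) ≤ Module.finrank ℝ (Submodule.map J (U (-ε))) :=
            Submodule.finrank_mono h1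
        _ ≤ Module.finrank ℝ (U (-ε)) := Submodule.finrank_map_le J (U (-ε))
    have heq : Module.finrank ℝ (U 1) = Module.finrank ℝ (U (-1)) := by
      have h1 := hle 1 (Or.inl rfl)
      have h2 := hle (-1) (Or.inr rfl)
      rw [neg_neg] at h2
      omega
    have hsum : Module.finrank ℝ (U 1) + Module.finrank ℝ (U (-1)) = 2 * l := by
      have hinf : U 1 ⊓ U (-1) = ⊥ := by
        rw [eq_bot_iff]
        intro v hv
        rw [Submodule.mem_inf] at hv
        obtain ⟨h1, h2⟩ := hv
        rw [hUmem] at h1 h2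
        have h3 : (1:ℝ) • v = (-1:ℝ) • v := by rw [← h1, ← h2]
        rw [one_smul, neg_one_smul] at h3
        have h4 : v + v = 0 := by nth_rewrite 2 [h3]; simp
        have h5 : (2:ℝ) • v = 0 := by rw [two_smul]; exact h4
        have h6 : v = 0 := by simpa using h5
        simp [h6]
      have hsup : U 1 ⊔ U (-1) = ⊤ := by
        rw [eq_top_iff]
        intro v _
        have hv : v = (2:ℝ)⁻¹ • (v + S v) + (2:ℝ)⁻¹ • (v - S v) := by module
        rw [hv]
        apply Submodule.add_mem
        · apply Submodule.smul_mem
          apply Submodule.mem_sup_left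
          rw [hUmem]
          rw [map_add, hSS, one_smul, add_comm]
        · apply Submodule.smul_mem
          apply Submodule.mem_sup_right
          rw [hUmem]
          rw [map_sub, hSS]
          module
      have := Submodule.finrank_sup_add_finrank_inf_eq (U 1) (U (-1))
      rw [hinf, hsup] at this
      simpa [hdimE] using this.symm
    rintro ε (rfl | rfl) <;> omega
  -- transfer tool
  have hval : ∀ (V : Submodule ℝ (EPT l)) (hVT : V ≤ T) (μ : ℝ),
      (∀ x : T, (x : EPT l) ∈ V → A x = μ • x) →
      Module.finrank ℝ V ≤ Module.finrank ℝ (Module.End.eigenspace A μ) := by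
    intro V hVT μ hAx
    have h1 : Submodule.comap T.subtype V ≤ Module.End.eigenspace A μ := by
      intro x hx
      rw [Module.End.mem_eigenspace_iff]
      exact hAx x hx
    have h2 := (Submodule.comapSubtypeEquivOfLe hVT).finrank_eq
    rw [← h2]
    exact Submodule.finrank_mono h1
  -- main bound for the ±1 eigenspaces
  have hmain : ∀ ε : ℝ, ε = 1 ∨ ε = -1 →
      l ≤ Module.finrank ℝ (Module.End.eigenspace A (-ε)) + (m + 1) := by
    intro ε hε
    have hε2 : ε * ε = 1 := by rcases hε with rfl | rfl <;> norm_num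
    have hεne : ε ≠ 0 := by rcases hε with rfl | rfl <;> norm_num
    set p : Fin (m+1) → EPT l := fun β => n β + ε • S (n β) with hp
    set Psp : Submodule ℝ (EPT l) := Submodule.span ℝ (Set.range p) with hPsp
    have hPcard : Module.finrank ℝ Psp ≤ m + 1 := by
      have h1 := finrank_span_le_card (R := ℝ) (Set.range p)
      rw [Set.toFinset_range] at h1
      exact h1.trans ((Finset.card_image_le).trans (by simp))
    have hVT : U ε ⊓ Pspᗮ ≤ T := by
      intro u hu
      rw [Submodule.mem_inf] at hu
      obtain ⟨huU, huP⟩ := hu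
      rw [hUmem] at huU
      have hporth : ∀ β, (inner ℝ (p β) u : ℝ) = 0 := by
        intro β
        exact (Submodule.mem_orthogonal _ _).mp huP (p β) (Submodule.subset_span ⟨β, rfl⟩)
      have hnu : ∀ β, (inner ℝ (n β) u : ℝ) = 0 := by
        intro β
        have h1 := hporth β
        rw [hp] at h1
        simp only [inner_add_left, real_inner_smul_left] at h1
        have h2 : (inner ℝ (S (n β)) u : ℝ) = ε * inner ℝ (n β) u := by
          rw [hadj, huU, real_inner_smul_right]
        rw [h2, ← mul_assoc, hε2, one_mul] at h1
        linarith
      have hzu : (inner ℝ z u : ℝ) = 0 := by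
        have h1 := hporth α
        rw [hp] at h1
        simp only [hnα, hSS, inner_add_left, real_inner_smul_left] at h1
        have h2 : (inner ℝ (S z) u : ℝ) = 0 := by rw [← hnα]; exact hnu α
        rw [h2] at h1
        have h3 : ε * (inner ℝ z u : ℝ) = 0 := by linarith
        exact (mul_eq_zero.mp h3).resolve_left hεne
      rw [hT]
      apply mem_orth_span
      intro v hv
      rcases hv with rfl | ⟨β, rfl⟩
      · exact hzu
      · exact hnu β
    have hrank := Submodule.finrank_sup_add_finrank_inf_eq (U ε) Pspᗮ
    have hPorth : Module.finrank ℝ Psp + Module.finrank ℝ Pspᗮ = 2 * l := by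
      rw [← hdimE]; exact Psp.finrank_add_finrank_orthogonal
    have hsuple : Module.finrank ℝ ↥((U ε) ⊔ Pspᗮ) ≤ 2 * l := by
      rw [← hdimE]; exact Submodule.finrank_le _
    have hUl := hUdim ε hε
    have hAeig : ∀ x : T, (x : EPT l) ∈ U ε ⊓ Pspᗮ → A x = (-ε) • x := by
      intro x hx
      rw [Submodule.mem_inf] at hx
      have hxU : S (x : EPT l) = ε • (x : EPT l) := by rw [← hUmem]; exact hx.1
      have h3 : A x = -(T.orthogonalProjectionOnto (S (x : EPT l))) := by rw [hA]; rfl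
      rw [h3, hxU, _root_.map_smul, Submodule.orthogonalProjectionOnto_mem_subspace_eq_self, ← neg_smul]
    have hfin := hval _ hVT (-ε) hAeig
    omega
  -- kernel bound
  have hker : m ≤ Module.finrank ℝ (Module.End.eigenspace A 0) := by
    set k : {β : Fin (m+1) // β ≠ α} → EPT l := fun β => S (n β) with hk
    have hkON : Orthonormal ℝ k := by
      rw [orthonormal_iff_ite]
      intro i j
      have h1 : (inner ℝ (k i) (k j) : ℝ) = inner ℝ (n (i : Fin (m+1))) (n (j : Fin (m+1))) := by
        rw [hk]
        simp only []
        rw [hadj, hSS]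
      rw [h1, hnn]
      by_cases h : i = j
      · simp [h]
      · rw [if_neg h, if_neg (fun hc => h (Subtype.ext hc))]
    have hKT : Submodule.span ℝ (Set.range k) ≤ T := by
      rw [hT, Submodule.span_le]
      rintro _ ⟨β, rfl⟩
      apply mem_orth_span
      intro v hv
      rcases hv with rfl | ⟨γ, rfl⟩
      · rw [hk]
        simp only []
        rw [← hadj, ← hnα, hnn, if_neg (fun hc => β.prop hc.symm)]
      · exact hSn γ β
    have hKrank : Module.finrank ℝ (Submodule.span ℝ (Set.range k)) = m := by
      rw [finrank_span_eq_card hkON.linearIndependent]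
      simp [Fintype.card_subtype_compl]
    have hAk : ∀ x : T, (x : EPT l) ∈ Submodule.span ℝ (Set.range k) → A x = (0:ℝ) • x := by
      intro x hx
      have hS : S (x : EPT l) ∈ N := by
        have h1 : Submodule.map S (Submodule.span ℝ (Set.range k)) ≤ N := by
          rw [Submodule.map_span, Submodule.span_le]
          rintro _ ⟨_, ⟨β, rfl⟩, rfl⟩
          have h2 : S (k β) = n (β : Fin (m+1)) := by rw [hk]; exact hSS _
          rw [h2]
          exact Submodule.subset_span (Set.mem_insert_of_mem _ ⟨β, rfl⟩)
        exact h1 ⟨(x : EPT l), hx, rfl⟩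
      have hproj : T.orthogonalProjectionOnto (S (x : EPT l)) = 0 := by
        apply Submodule.orthogonalProjectionOnto_apply_of_mem_orthogonal
        have hNT : N ≤ Tᗮ := by rw [hT]; exact N.le_orthogonal_orthogonal
        exact hNT hS
      have h3 : A x = -(T.orthogonalProjectionOnto (S (x : EPT l))) := by rw [hA]; rfl
      rw [h3, hproj, zero_smul, neg_zero]
    have := hval _ hKT 0 hAk
    omega
  -- upper bound from independence of eigenspaces
  have hupper : Module.finrank ℝ (Module.End.eigenspace A 1)
      + Module.finrank ℝ (Module.End.eigenspace A 0)
      + Module.finrank ℝ (Module.End.eigenspace A (-1)) ≤ Module.finrank ℝ T := by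
    set W1 := Module.End.eigenspace A 1 with hW1
    set W0 := Module.End.eigenspace A 0 with hW0
    set W2 := Module.End.eigenspace A (-1) with hW2
    have h10 : W1 ⊓ W0 = ⊥ := by
      rw [eq_bot_iff]
      intro x hx
      rw [Submodule.mem_inf] at hx
      obtain ⟨h1, h0⟩ := hx
      rw [hW1, Module.End.mem_eigenspace_iff, one_smul] at h1
      rw [hW0, Module.End.mem_eigenspace_iff, zero_smul] at h0
      rw [Submodule.mem_bot, ← h1, h0]
    have hdisj : Disjoint (W1 ⊔ W0) W2 := by
      have hindep := Module.End.eigenspaces_iSupIndep (f := (A : Module.End ℝ T))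
      have hd := (iSupIndep_def.mp hindep) (-1)
      have hle : W1 ⊔ W0 ≤ ⨆ (j : ℝ) (_ : j ≠ (-1:ℝ)), Module.End.eigenspace A j := by
        apply sup_le
        · exact le_iSup_of_le 1 (le_iSup_of_le (by norm_num) le_rfl)
        · exact le_iSup_of_le 0 (le_iSup_of_le (by norm_num) le_rfl)
      exact (hd.mono_right hle).symm
    have hc1 := Submodule.finrank_sup_add_finrank_inf_eq W1 W0
    rw [h10, finrank_bot] at hc1
    have hc2 := Submodule.finrank_sup_add_finrank_inf_eq (W1 ⊔ W0) W2
    rw [disjoint_iff.mp hdisj, finrank_bot] at hc2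
    have h3 := Submodule.finrank_le (W1 ⊔ W0 ⊔ W2)
    omega
  have h1 := hmain 1 (Or.inl rfl)
  have h2 := hmain (-1) (Or.inr rfl)
  rw [show (-(1:ℝ)) = -1 from rfl] at h1
  rw [show (-(-1:ℝ)) = 1 by norm_num] at h2
  refine ⟨by omega, by omega, by omega⟩

/-- in the Pinkall–Thorbergsson construction, for `z ∈ M₊ᵗ` and
`1 ≤ α ≤ m`, the shape operator of `M₊ᵗ ⊂ S^{2l-1}` w.r.t. the unit normal `Q_α z`,
given by `X ↦ -(Q_α X)ᵀ` on `T_z M₊ᵗ`, has eigenvalues `1, 0, -1` with multiplicities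
`l-m-1`, `m`, `l-m-1` respectively. -/
theorem statement7 (l m : ℕ) (hl : m + 2 ≤ l) (t : ℝ) (ht0 : 0 < t) (ht : t ≤ π / 4)
    (P : Fin (m + 1) → Matrix (Fin l ⊕ Fin l) (Fin l ⊕ Fin l) ℝ)
    (hSymm : ∀ α, (P α).IsSymm)
    (hCliff : ∀ α β, P α * P β + P β * P α =
      if α = β then (2 : ℝ) • (1 : Matrix (Fin l ⊕ Fin l) (Fin l ⊕ Fin l) ℝ) else 0)
    (hP0 : P 0 = Matrix.fromBlocks 1 0 0 (-1))
    (Q : Fin (m + 1) → Matrix (Fin l ⊕ Fin l) (Fin l ⊕ Fin l) ℝ)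
    (hQ : Q = fun α => if α = 0 then ptQzero l t else P α)
    (z : EuclideanSpace ℝ (Fin l ⊕ Fin l))
    (hzx : ∑ i, z (Sum.inl i) ^ 2 = Real.cos t ^ 2)
    (hzy : ∑ i, z (Sum.inr i) ^ 2 = Real.sin t ^ 2)
    (hM : ∀ α, inner ℝ z (matLin (Q α) z) = (0 : ℝ)) :
    ∀ α : Fin (m + 1), α ≠ 0 →
      Module.finrank ℝ
        (Module.End.eigenspace (shapeOp (ptTangent Q z) (Q α)) 1) = l - m - 1 ∧
      Module.finrank ℝ
        (Module.End.eigenspace (shapeOp (ptTangent Q z) (Q α)) 0) = m ∧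
      Module.finrank ℝ
        (Module.End.eigenspace (shapeOp (ptTangent Q z) (Q α)) (-1)) = l - m - 1 := by
  intro α hα
  classical
  -- trigonometry
  have hcpos : 0 < Real.cos t := by
    apply Real.cos_pos_of_mem_Ioo
    constructor
    · linarith [Real.pi_pos]
    · calc t ≤ π / 4 := ht
        _ < π / 2 := by linarith [Real.pi_pos]
  have hspos : 0 < Real.sin t := by
    apply Real.sin_pos_of_pos_of_lt_pi ht0
    calc t ≤ π / 4 := ht
      _ < π := by linarith [Real.pi_pos]
  have hc := ne_of_gt hcpos
  have hs := ne_of_gt hspos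
  -- abbreviations
  set c : ℝ := (Real.tan t - Real.cot t) / 2 with hcdef
  set d : ℝ := (Real.tan t + Real.cot t) / 2 with hddef
  -- Clifford facts
  have hPsq : ∀ β, P β * P β = (1 : MPT l) := by
    intro β
    have h := hCliff β β
    rw [if_pos rfl] at h
    have h2 : (2:ℝ) • (P β * P β) = (2:ℝ) • (1 : MPT l) := by
      rw [two_smul]; exact h
    exact smul_right_injective (MPT l) (two_ne_zero) h2
  have hPP : ∀ β γ, β ≠ γ → P β * P γ = -(P γ * P β) := by
    intro β γ h
    have h2 := hCliff β γ
    rw [if_neg h] at h2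
    exact eq_neg_of_add_eq_zero_left h2
  have hQα : Q α = P α := by rw [hQ]; simp [hα]
  have hQzero : Q 0 = ptQzero l t := by rw [hQ]; simp
  have hQne : ∀ β, β ≠ (0 : Fin (m+1)) → Q β = P β := by
    intro β hβ; rw [hQ]; simp [hβ]
  have hQ0 : Q 0 = c • (1 : MPT l) + d • P 0 := by
    rw [hQ]; simp only [if_pos rfl]
    rw [ptQzero, hP0]
    ext i j
    rcases i with i | i <;> rcases j with j | j <;>
        simp [Matrix.fromBlocks, Matrix.one_apply, hcdef, hddef] <;>
      by_cases h : i = j <;> simp [h] <;> ring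
  -- symmetry of the Q's
  have hQsymm : ∀ β, (Q β)ᵀ = Q β := by
    intro β
    by_cases hβ : β = 0
    · subst hβ
      rw [hQ0, Matrix.transpose_add, Matrix.transpose_smul, Matrix.transpose_smul,
        Matrix.transpose_one, (hSymm 0).eq]
    · rw [hQne β hβ, (hSymm β).eq]
  -- the quadratic form φ
  have hφQ : ∀ β, (inner ℝ z (matLin (Q β) z) : ℝ) = 0 := hM
  have hφdiag : ∀ a b : ℝ,
      (inner ℝ z (matLin (Matrix.fromBlocks (a • (1 : Matrix (Fin l) (Fin l) ℝ)) 0 0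
        (b • (1 : Matrix (Fin l) (Fin l) ℝ))) z) : ℝ) = a * Real.cos t ^ 2 + b * Real.sin t ^ 2 := by
    intro a b
    rw [PiLp.inner_apply]
    simp only [RCLike.inner_apply, conj_trivial]
    rw [Fintype.sum_sum_type]
    simp only [matLin_diag_inl, matLin_diag_inr]
    have e1 : ∑ i : Fin l, a * z (Sum.inl i) * z (Sum.inl i) = a * ∑ i : Fin l, z (Sum.inl i) ^ 2 := by
      rw [Finset.mul_sum]; apply Finset.sum_congr rfl; intros; ring
    have e2 : ∑ i : Fin l, b * z (Sum.inr i) * z (Sum.inr i) = b * ∑ i : Fin l, z (Sum.inr i) ^ 2 := by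
      rw [Finset.mul_sum]; apply Finset.sum_congr rfl; intros; ring
    rw [e1, e2, hzx, hzy]
  have hφ1 : (inner ℝ z (matLin (1 : MPT l) z) : ℝ) = 1 := by
    have h1 : (1 : MPT l) = Matrix.fromBlocks ((1:ℝ) • 1) 0 0 ((1:ℝ) • 1) := by
      rw [one_smul, Matrix.fromBlocks_one]
    rw [h1, hφdiag]
    nlinarith [Real.sin_sq_add_cos_sq t]
  have hφP0 : (inner ℝ z (matLin (P 0) z) : ℝ) = Real.cos t ^ 2 - Real.sin t ^ 2 := by
    have h1 : P 0 = Matrix.fromBlocks ((1:ℝ) • 1) 0 0 ((-1:ℝ) • 1) := by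
      rw [hP0]; congr 1 <;> simp
    rw [h1, hφdiag]; ring
  have hφadd : ∀ A B : MPT l, (inner ℝ z (matLin (A + B) z) : ℝ) =
      (inner ℝ z (matLin A z) : ℝ) + inner ℝ z (matLin B z) := by
    intro A B; rw [matLin_add, inner_add_right]
  have hφsmul : ∀ (r : ℝ) (A : MPT l), (inner ℝ z (matLin (r • A) z) : ℝ) =
      r * inner ℝ z (matLin A z) := by
    intro r A; rw [matLin_smul, real_inner_smul_right]
  have hφneg : ∀ A : MPT l, (inner ℝ z (matLin (-A) z) : ℝ) = -(inner ℝ z (matLin A z) : ℝ) := by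
    intro A; rw [matLin_neg, inner_neg_right]
  -- inner ℝ products of the normal vectors
  have hinner2 : ∀ β γ, (inner ℝ (matLin (Q β) z) (matLin (Q γ) z) : ℝ)
      = inner ℝ z (matLin (Q β * Q γ) z) := by
    intro β γ
    rw [inner_matLin, hQsymm, ← matLin_mul]
  have hnn : ∀ β γ, (inner ℝ (matLin (Q β) z) (matLin (Q γ) z) : ℝ) = if β = γ then 1 else 0 := by
    intro β γ
    rw [hinner2]
    by_cases hβγ : β = γ
    · subst hβγ
      rw [if_pos rfl]
      by_cases hβ : β = 0
      · subst hβ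
        have hQQ : Q 0 * Q 0 = Matrix.fromBlocks ((Real.tan t * Real.tan t) • 1) 0 0
            ((Real.cot t * Real.cot t) • 1) := by
          rw [hQzero, ptQzero, Matrix.fromBlocks_multiply]
          congr 1 <;> simp [smul_smul, Matrix.smul_mul, Matrix.mul_smul]
        rw [hQQ, hφdiag]
        rw [Real.cot_eq_cos_div_sin, Real.tan_eq_sin_div_cos]
        field_simp
        linear_combination Real.sin_sq_add_cos_sq t
      · rw [hQne β hβ, hPsq β, hφ1]
    · rw [if_neg hβγ]
      have htr : (Q β * Q γ)ᵀ = Q γ * Q β := by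
        rw [Matrix.transpose_mul, hQsymm, hQsymm]
      have h2 : (2:ℝ) * (inner ℝ z (matLin (Q β * Q γ) z) : ℝ)
          = inner ℝ z (matLin (Q β * Q γ + Q γ * Q β) z) := by
        rw [hφadd, ← htr, phi_transpose]; ring
      have hzero : (inner ℝ z (matLin (Q β * Q γ + Q γ * Q β) z) : ℝ) = 0 := by
        by_cases hβ : β = 0
        · subst hβ
          have hexp : Q 0 * Q γ + Q γ * Q 0 = (2*c) • Q γ := by
            rw [hQ0, hQne γ (Ne.symm hβγ)]
            rw [add_mul, mul_add, Matrix.smul_mul, Matrix.mul_smul, Matrix.smul_mul,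
              Matrix.mul_smul, one_mul, mul_one, hPP 0 γ hβγ]
            rw [two_mul, add_smul]
            module
          rw [hexp, hφsmul, hφQ, mul_zero]
        · by_cases hγ : γ = 0
          · subst hγ
            have hexp : Q β * Q 0 + Q 0 * Q β = (2*c) • Q β := by
              rw [hQ0, hQne β hβ]
              rw [add_mul, mul_add, Matrix.smul_mul, Matrix.mul_smul, Matrix.smul_mul,
                Matrix.mul_smul, one_mul, mul_one, hPP 0 β (Ne.symm hβ)]
              rw [two_mul, add_smul]
              module
            rw [hexp, hφsmul, hφQ, mul_zero]
          · have hexp : Q β * Q γ + Q γ * Q β = 0 := by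
              rw [hQne β hβ, hQne γ hγ]
              have := hCliff β γ
              rwa [if_neg hβγ] at this
            rw [hexp]
            simp [matLin]
      linarith
  -- triple products
  have hinner3 : ∀ β γ, (inner ℝ (matLin (Q β) z) (matLin (Q α) (matLin (Q γ) z)) : ℝ)
      = inner ℝ z (matLin (Q β * (Q α * Q γ)) z) := by
    intro β γ
    rw [inner_matLin, hQsymm, ← matLin_mul, ← matLin_mul, mul_assoc]
  have tripleswap : ∀ a b g : Fin (m+1), a ≠ b → b ≠ g → a ≠ g →
      P g * (P b * P a) = -(P a * (P b * P g)) := by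
    intro a b g hab hbg hag
    rw [hPP b a (Ne.symm hab), mul_neg, ← mul_assoc, hPP g a (Ne.symm hag), neg_mul, neg_neg,
      mul_assoc, hPP g b (Ne.symm hbg), mul_neg]
  have hIden : ∀ γ, γ ≠ 0 → γ ≠ α → Q γ * (Q α * Q 0) = -(Q 0 * (Q α * Q γ)) := by
    intro γ hγ0 hγα
    rw [hQ0, hQα, hQne γ hγ0]
    simp only [mul_add, Matrix.mul_smul, mul_one, Matrix.smul_mul, one_mul, add_mul]
    rw [hPP γ α hγα, tripleswap 0 α γ (Ne.symm hα) (Ne.symm hγα) (Ne.symm hγ0)]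
    module
  have hQQQ : ∀ β γ, (inner ℝ z (matLin (Q β * (Q α * Q γ)) z) : ℝ) = 0 := by
    intro β γ
    by_cases hγα : γ = α
    · subst hγα
      have hexp : Q β * (Q γ * Q γ) = Q β := by
        rw [hQα, hPsq γ, mul_one]
      rw [hexp, hφQ]
    · by_cases hβα : β = α
      · subst hβα
        have hexp : Q β * (Q β * Q γ) = Q γ := by
          rw [hQα, ← mul_assoc, hPsq β, one_mul]
        rw [hexp, hφQ]
      · by_cases hβγ : β = γ
        · subst hβγ
          by_cases hβ0 : β = 0
          · subst hβ0
            have hexp : Q 0 * (Q α * Q 0) = (c*c - d*d) • P α := by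
              rw [hQ0, hQα]
              simp only [mul_add, Matrix.mul_smul, mul_one, Matrix.smul_mul, one_mul, add_mul]
              rw [hPP α 0 hα]
              have h00 : P 0 * (P 0 * P α) = P α := by rw [← mul_assoc, hPsq 0, one_mul]
              simp only [mul_neg, h00]
              module
            rw [hexp, hφsmul]
            have : (inner ℝ z (matLin (P α) z) : ℝ) = 0 := by rw [← hQα]; exact hφQ α
            rw [this, mul_zero]
          · have hexp : Q β * (Q α * Q β) = -(P α) := by
              rw [hQne β hβ0, hQα, hPP α β (Ne.symm hβα), mul_neg, ← mul_assoc, hPsq β, one_mul]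
            rw [hexp, hφneg]
            have : (inner ℝ z (matLin (P α) z) : ℝ) = 0 := by rw [← hQα]; exact hφQ α
            rw [this, neg_zero]
        · have htr : (Q β * (Q α * Q γ))ᵀ = Q γ * (Q α * Q β) := by
            rw [Matrix.transpose_mul, Matrix.transpose_mul, hQsymm, hQsymm, hQsymm, mul_assoc]
          have hswap : Q γ * (Q α * Q β) = -(Q β * (Q α * Q γ)) := by
            by_cases hβ0 : β = 0
            · subst hβ0
              have hγ0 : γ ≠ 0 := Ne.symm hβγ
              exact hIden γ hγ0 hγα
            · by_cases hγ0 : γ = 0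
              · subst hγ0
                rw [hIden β hβ0 hβα, neg_neg]
              · rw [hQα, hQne β hβ0, hQne γ hγ0]
                exact tripleswap β α γ hβα (Ne.symm hγα) hβγ
          exact phi_skew (htr.trans hswap) z
  have hSn : ∀ β γ, (inner ℝ (matLin (Q β) z) (matLin (Q α) (matLin (Q γ) z)) : ℝ) = 0 := by
    intro β γ; rw [hinner3]; exact hQQQ β γ
  -- norm of z
  have hzz : (inner ℝ z z : ℝ) = 1 := by
    rw [PiLp.inner_apply]
    simp only [RCLike.inner_apply, conj_trivial]
    rw [Fintype.sum_sum_type]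
    have e1 : ∑ i : Fin l, z (Sum.inl i) * z (Sum.inl i) = ∑ i : Fin l, z (Sum.inl i) ^ 2 := by
      apply Finset.sum_congr rfl; intros; ring
    have e2 : ∑ i : Fin l, z (Sum.inr i) * z (Sum.inr i) = ∑ i : Fin l, z (Sum.inr i) ^ 2 := by
      apply Finset.sum_congr rfl; intros; ring
    rw [e1, e2, hzx, hzy]
    linarith [Real.sin_sq_add_cos_sq t]
  -- operator facts
  have hadj : ∀ x y : EuclideanSpace ℝ (Fin l ⊕ Fin l),
      (inner ℝ (matLin (Q α) x) y : ℝ) = inner ℝ x (matLin (Q α) y) := by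
    intro x y; rw [inner_matLin, hQsymm]
  have hSS : ∀ x, matLin (Q α) (matLin (Q α) x) = x := by
    intro x; rw [← matLin_mul, hQα, hPsq, matLin_one]
  have hJJ : ∀ x, matLin (P 0) (matLin (P 0) x) = x := by
    intro x; rw [← matLin_mul, hPsq, matLin_one]
  have hJS : ∀ x, matLin (P 0) (matLin (Q α) x) = -(matLin (Q α) (matLin (P 0) x)) := by
    intro x
    rw [hQα, ← matLin_mul, hPP 0 α (Ne.symm hα), matLin_neg, matLin_mul]
  exact key l m hl (matLin (Q α)) (matLin (P 0)) z (fun β => matLin (Q β) z) α hadj hSS hJJ hJS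
    rfl hzz hM hnn hSn (ptTangent Q z) rfl (shapeOp (ptTangent Q z) (Q α)) rfl

end
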